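/- Suppose R ∈ B satisfies R^m = 0 for a natural number m, α is a nonzero rational number, and R solves the master equation δ_α(R) = (1/2)·{R,R}, where δ_α := d + α·∂. Then the truncated exponential exp(R/α) := Σ_{k=0}^{m+1} R^k/(α^k·k!) satisfies δ_α( Σ_{k=0}^{m+1} R^k/(α^k·k!) ) = 0. -/
import Mathlib

/-- If `R` is nilpotent (`R^m = 0`), `α ≠ 0`, and `R` solves the master equation
`δ_α(R) = (1/2)·{R,R}` with `δ_α = d + α·∂`, then the truncated exponential
`exp(R/α) = Σ_{k=0}^{m+1} R^k/(α^k·k!)` is `δ_α`-closed. -/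
theorem delta_alpha_exp_master
    (B : Type*) [CommRing B] [Algebra ℚ B]
    (d p : B →ₗ[ℚ] B) (br : B →ₗ[ℚ] B →ₗ[ℚ] B)
    (hd : ∀ x y : B, d (x * y) = d x * y + x * d y)
    (hp : ∀ x y : B, p (x * y) = p x * y + x * p y - br x y)
    (hbr : ∀ x y z : B, br x (y * z) = br x y * z + y * br x z)
    (hp1 : p 1 = 0)
    (R : B) (m : ℕ) (hR : R ^ m = 0)
    (α : ℚ) (hα : α ≠ 0)
    (hmaster : d R + α • p R = (1 / 2 : ℚ) • br R R) :
    d (∑ k ∈ Finset.range (m + 2), (α ^ k * (k.factorial : ℚ))⁻¹ • R ^ k)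
      + α • p (∑ k ∈ Finset.range (m + 2), (α ^ k * (k.factorial : ℚ))⁻¹ • R ^ k) = 0 := by
  set Q := br R R with hQ
  have hd1 : d 1 = 0 := by have := hd 1 1; simp at this; exact this
  have hdpow : ∀ k : ℕ, d (R ^ (k + 1)) = ((k : ℚ) + 1) • (R ^ k * d R) := by
    intro k
    induction k with
    | zero => simp
    | succ n ih =>
      have e0 : R ^ (n + 2) = R * R ^ (n + 1) := by ring
      rw [e0, hd, ih, mul_smul_comm]
      have e1 : R * (R ^ n * d R) = R ^ (n + 1) * d R := by ring
      have e2 : d R * R ^ (n + 1) = R ^ (n + 1) * d R := by ring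
      rw [e1, e2]
      match_scalars; push_cast; ring
  have hbrpow : ∀ k : ℕ, br R (R ^ (k + 1)) = ((k : ℚ) + 1) • (R ^ k * Q) := by
    intro k
    induction k with
    | zero => simp [hQ]
    | succ n ih =>
      have e0 : R ^ (n + 2) = R * R ^ (n + 1) := by ring
      rw [e0, hbr, ih, mul_smul_comm]
      have e1 : R * (R ^ n * Q) = R ^ (n + 1) * Q := by ring
      have e2 : Q * R ^ (n + 1) = R ^ (n + 1) * Q := by ring
      rw [e1, e2]
      match_scalars; push_cast; ring
  have hppow : ∀ k : ℕ, p (R ^ (k + 2)) =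
      ((k : ℚ) + 2) • (R ^ (k + 1) * p R)
        - (((k : ℚ) + 2) * ((k : ℚ) + 1) / 2) • (R ^ k * Q) := by
    intro k
    induction k with
    | zero =>
      have h2 : R ^ 2 = R * R := by ring
      rw [h2, hp, ← hQ]
      have e1 : p R * R = R ^ 1 * p R := by ring
      have e2 : R * p R = R ^ 1 * p R := by ring
      have e3 : Q = R ^ 0 * Q := by ring
      rw [e1, e2]; nth_rewrite 1 [e3]
      match_scalars <;> norm_num
    | succ n ih =>
      have e0 : R ^ (n + 3) = R * R ^ (n + 2) := by ring
      rw [e0, hp, ih, hbrpow (n + 1), mul_sub, mul_smul_comm, mul_smul_comm]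
      have e1 : R * (R ^ (n + 1) * p R) = R ^ (n + 2) * p R := by ring
      have e2 : R * (R ^ n * Q) = R ^ (n + 1) * Q := by ring
      have e3 : p R * R ^ (n + 2) = R ^ (n + 2) * p R := by ring
      rw [e1, e2, e3]
      match_scalars <;> push_cast <;> ring
  set g : ℕ → B := fun k =>
    ((k : ℚ) / 2 * (α ^ k * (k.factorial : ℚ))⁻¹) • (R ^ (k - 1) * Q) with hg
  have hg0 : g 0 = 0 := by simp [hg]
  have hgm : g (m + 1) = 0 := by
    simp only [hg, Nat.add_sub_cancel, hR, zero_mul, smul_zero]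
  have hdR : d R = (1 / 2 : ℚ) • Q - α • p R := by rw [← hmaster]; abel
  have key : ∀ j : ℕ,
      (α ^ (j + 1) * ((j + 1).factorial : ℚ))⁻¹ • d (R ^ (j + 1))
        + α • (α ^ (j + 1) * ((j + 1).factorial : ℚ))⁻¹ • p (R ^ (j + 1))
      = g (j + 1) - g j := by
    intro j
    have hfne : ∀ n : ℕ, ((n.factorial : ℚ)) ≠ 0 :=
      fun n => Nat.cast_ne_zero.mpr n.factorial_ne_zero
    match j with
    | 0 =>
      have h1 : d (R ^ 1) = d R := by rw [pow_one]
      have h2 : p (R ^ 1) = p R := by rw [pow_one]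
      rw [h1, h2, hdR]
      simp only [hg]
      norm_num
      match_scalars <;> · field_simp; try ring
    | Nat.succ i =>
      have hdw := hdpow (i + 1)
      have hpw := hppow i
      rw [Nat.succ_eq_add_one] at *
      rw [hdw, hdR, mul_sub, mul_smul_comm, mul_smul_comm, hpw]
      simp only [hg, Nat.add_sub_cancel]
      have hfi := hfne i
      have hfi1 := hfne (i + 1)
      match_scalars <;>
      · push_cast [Nat.factorial_succ]
        field_simp
        try ring
        try tauto
  -- assemble
  rw [map_sum, map_sum]
  simp only [map_smul]
  rw [Finset.smul_sum, ← Finset.sum_add_distrib]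
  rw [Finset.sum_range_succ']
  have h0 : (α ^ 0 * ((0 : ℕ).factorial : ℚ))⁻¹ • d (R ^ 0)
      + α • (α ^ 0 * ((0 : ℕ).factorial : ℚ))⁻¹ • p (R ^ 0) = 0 := by
    simp [hd1, hp1]
  rw [h0, add_zero]
  have : ∀ i ∈ Finset.range (m + 1),
      (α ^ (i + 1) * ((i + 1).factorial : ℚ))⁻¹ • d (R ^ (i + 1))
        + α • (α ^ (i + 1) * ((i + 1).factorial : ℚ))⁻¹ • p (R ^ (i + 1))
      = g (i + 1) - g i := fun i _ => key i
  rw [Finset.sum_congr rfl this, Finset.sum_range_sub, hgm, hg0, sub_zero]
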